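/- Let P be the Type A_n root poset. The antichain cardinality statistic I ↦ #max(I) equals n/2 plus an ℝ-linear combination of the signed toggleability statistics T_p; hence its average along any rowmotion orbit is n/2. -/

import Mathlib

open scoped Classical
open Finset

variable {P : Type*} [Fintype P] [PartialOrder P]

/-- `I` is an order ideal (downward-closed subset) of the finite poset `P`. -/
def IsIdeal (I : Finset P) : Prop := ∀ ⦃x y : P⦄, x ≤ y → y ∈ I → x ∈ I

/-- `p` is a minimal element of the complement `P \ I`. -/
def CanTogIn (I : Finset P) (p : P) : Prop := p ∉ I ∧ ∀ q, q < p → q ∈ I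

/-- `p` is a maximal element of `I`. -/
def CanTogOut (I : Finset P) (p : P) : Prop := p ∈ I ∧ ∀ q, p < q → q ∉ I

/-- Rowmotion: the order ideal generated by the minimal elements of `P \ I`. -/
noncomputable def rowmotion (I : Finset P) : Finset P :=
  univ.filter fun x => ∃ y, CanTogIn I y ∧ x ≤ y

/-- Toggleability statistic `T⁺_p`. -/
noncomputable def Tin (p : P) (I : Finset P) : ℝ := if CanTogIn I p then 1 else 0

/-- Toggleability statistic `T⁻_p`. -/
noncomputable def Tout (p : P) (I : Finset P) : ℝ := if CanTogOut I p then 1 else 0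

/-- Signed toggleability statistic `T_p = T⁺_p - T⁻_p`. -/
noncomputable def Tsgn (p : P) (I : Finset P) : ℝ := Tin p I - Tout p I

/-- The Type `A_n` root poset, realized as `{(i,j) : 1 ≤ i,j ≤ n, i+j ≥ n+1}`
with componentwise order (coordinates taken in `Fin (n+1)`, i.e. `0,…,n`). -/
abbrev RootA (n : ℕ) :=
  {p : Fin (n + 1) × Fin (n + 1) // 1 ≤ p.1.val ∧ 1 ≤ p.2.val ∧ n + 1 ≤ p.1.val + p.2.val}

/-! ### General poset lemmas -/

lemma rowmotion_isIdeal (I : Finset P) : IsIdeal (rowmotion I) := by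
  intro x y hxy hy
  simp only [rowmotion, mem_filter, mem_univ, true_and] at hy ⊢
  obtain ⟨z, hz, hyz⟩ := hy
  exact ⟨z, hz, hxy.trans hyz⟩

lemma canTogOut_rowmotion (I : Finset P) (p : P) :
    CanTogOut (rowmotion I) p ↔ CanTogIn I p := by
  constructor
  · rintro ⟨hp, hmax⟩
    simp only [rowmotion, mem_filter, mem_univ, true_and] at hp
    obtain ⟨y, hy, hpy⟩ := hp
    rcases eq_or_lt_of_le hpy with rfl | hlt
    · exact hy
    · have hymem : y ∈ rowmotion I := by
        simp only [rowmotion, mem_filter, mem_univ, true_and]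
        exact ⟨y, hy, le_refl y⟩
      exact absurd hymem (hmax y hlt)
  · rintro ⟨hp, hmin⟩
    have hpmem : p ∈ rowmotion I := by
      simp only [rowmotion, mem_filter, mem_univ, true_and]
      exact ⟨p, ⟨hp, hmin⟩, le_refl p⟩
    refine ⟨hpmem, ?_⟩
    intro q hq hqmem
    simp only [rowmotion, mem_filter, mem_univ, true_and] at hqmem
    obtain ⟨y, hy, hqy⟩ := hqmem
    exact hp (hy.2 p (lt_of_lt_of_le hq hqy))

/-! ### Coordinates on the root poset -/

namespace RootAAux

variable {n : ℕ}

def X (p : RootA n) : ℕ := p.val.1.val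
def Y (p : RootA n) : ℕ := p.val.2.val

lemma bnd (p : RootA n) :
    1 ≤ X p ∧ X p ≤ n ∧ 1 ≤ Y p ∧ Y p ≤ n ∧ n + 1 ≤ X p + Y p := by
  obtain ⟨⟨a, b⟩, h1, h2, h3⟩ := p
  exact ⟨h1, Nat.lt_succ_iff.mp a.isLt, h2, Nat.lt_succ_iff.mp b.isLt, h3⟩

lemma le_iff' (p q : RootA n) : p ≤ q ↔ X p ≤ X q ∧ Y p ≤ Y q := Iff.rfl

lemma eq_iff' (p q : RootA n) : p = q ↔ X p = X q ∧ Y p = Y q := by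
  constructor
  · rintro rfl; exact ⟨rfl, rfl⟩
  · rintro ⟨h1, h2⟩
    exact Subtype.ext (Prod.ext (Fin.ext h1) (Fin.ext h2))

lemma lt_iff' (p q : RootA n) :
    p < q ↔ X p ≤ X q ∧ Y p ≤ Y q ∧ ¬(X p = X q ∧ Y p = Y q) := by
  rw [lt_iff_le_and_ne, le_iff', Ne, eq_iff']
  tauto

def mkE (i j : ℕ) (h : 1 ≤ i ∧ i ≤ n ∧ 1 ≤ j ∧ j ≤ n ∧ n + 1 ≤ i + j) : RootA n :=
  ⟨(⟨i, by omega⟩, ⟨j, by omega⟩), h.1, h.2.2.1, h.2.2.2.2⟩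

@[simp] lemma X_mkE (i j : ℕ) (h) : X (mkE (n := n) i j h) = i := rfl
@[simp] lemma Y_mkE (i j : ℕ) (h) : Y (mkE (n := n) i j h) = j := rfl

/-! ### Weights -/

noncomputable def wA (p : RootA n) : ℝ := (X p + Y p : ℝ) - n
noncomputable def wB (p : RootA n) : ℝ := (X p + Y p : ℝ) - (n + 2)

noncomputable def g (I : Finset (RootA n)) (q : RootA n) : ℝ :=
  (if CanTogOut I q then wA q else 0) - (if CanTogIn I q then wB q else 0)

noncomputable def f (I : Finset (RootA n)) : ℝ := ∑ q, g I q

/-- No strictly smaller element below a rank-0 element. -/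
lemma no_lt_of_rank0 (p q : RootA n) (hs : X p + Y p = n + 1) : ¬ q < p := by
  rw [lt_iff']
  rintro ⟨h1, h2, h3⟩
  have := bnd q
  omega

end RootAAux
namespace RootAAux

variable {n : ℕ}

/-- A maximal element of `J` strictly below `p` (all of whose strict lower set is in `J`)
sits exactly one rank below `p`. -/
lemma out_sum (J : Finset (RootA n)) (p q : RootA n)
    (hp2 : ∀ r, r < p → r ∈ J) (hq : CanTogOut J q) (hqp : q < p) :
    X q + Y q + 1 = X p + Y p := by
  obtain ⟨h1, h2, h3⟩ := (lt_iff' q p).mp hqp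
  by_contra hcon
  have hsum : X q + Y q + 2 ≤ X p + Y p := by omega
  have hbq := bnd q
  have hbp := bnd p
  rcases Nat.lt_or_ge (X q) (X p) with hx | hx
  · set r : RootA n := mkE (X q + 1) (Y q) (by omega) with hr
    have hqr : q < r := by rw [lt_iff']; simp [hr]
    have hrp : r < p := by rw [lt_iff']; simp [hr]; omega
    exact hq.2 r hqr (hp2 r hrp)
  · have hy : Y q + 2 ≤ Y p := by omega
    set r : RootA n := mkE (X q) (Y q + 1) (by omega) with hr
    have hqr : q < r := by rw [lt_iff']; simp [hr]
    have hrp : r < p := by rw [lt_iff']; simp [hr]; omega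
    exact hq.2 r hqr (hp2 r hrp)

/-- An element of `min((P \ J) \ {p})`-type above `p` sits exactly one rank above `p`. -/
lemma in_sum (J : Finset (RootA n)) (p q : RootA n) (hJ : IsIdeal J) (hp1 : p ∉ J)
    (hq : CanTogIn (insert p J) q) (hpq : p < q) :
    X q + Y q = X p + Y p + 1 := by
  obtain ⟨h1, h2, h3⟩ := (lt_iff' p q).mp hpq
  by_contra hcon
  have hsum : X p + Y p + 2 ≤ X q + Y q := by omega
  have hbq := bnd q
  have hbp := bnd p
  have key : ∀ r : RootA n, p < r → r < q → False := by
    intro r hpr hrq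
    rcases Finset.mem_insert.mp (hq.2 r hrq) with hrp | hrJ
    · exact absurd hrp.symm (ne_of_lt hpr)
    · exact hp1 (hJ hpr.le hrJ)
  rcases Nat.lt_or_ge (X p) (X q) with hx | hx
  · set r : RootA n := mkE (X q - 1) (Y q) (by omega) with hr
    have hpr : p < r := by rw [lt_iff']; simp [hr]; omega
    have hrq : r < q := by rw [lt_iff']; simp [hr]; omega
    exact key r hpr hrq
  · have hy : Y p + 2 ≤ Y q := by omega
    set r : RootA n := mkE (X q) (Y q - 1) (by omega) with hr
    have hpr : p < r := by rw [lt_iff']; simp [hr]; omega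
    have hrq : r < q := by rw [lt_iff']; simp [hr]; omega
    exact key r hpr hrq

/-- Pointwise difference formula for `g` when inserting a minimal complement element. -/
lemma g_diff (J : Finset (RootA n)) (p : RootA n) (hJ : IsIdeal J)
    (hp1 : p ∉ J) (hp2 : ∀ q, q < p → q ∈ J) (q : RootA n) :
    g (insert p J) q - g J q =
      (if q = p then wA p + wB p else 0)
      - (if q < p ∧ CanTogOut J q then wA q else 0)
      - (if p < q ∧ CanTogIn (insert p J) q then wB q else 0) := by
  by_cases hqp : q = p
  · subst hqp
    have h1 : CanTogOut (insert q J) q := by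
      refine ⟨Finset.mem_insert_self q J, ?_⟩
      intro r hr hrmem
      rcases Finset.mem_insert.mp hrmem with h | h
      · exact absurd h.symm (ne_of_lt hr)
      · exact hp1 (hJ hr.le h)
    have h2 : ¬ CanTogOut J q := fun h => hp1 h.1
    have h3 : CanTogIn J q := ⟨hp1, hp2⟩
    have h4 : ¬ CanTogIn (insert q J) q := fun h => h.1 (Finset.mem_insert_self q J)
    have hA : (if q < q ∧ CanTogOut J q then wA q else 0) = 0 := by
      rw [if_neg]; rintro ⟨h, -⟩; exact lt_irrefl q h
    have hB : (if q < q ∧ CanTogIn (insert q J) q then wB q else 0) = 0 := by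
      rw [if_neg]; rintro ⟨h, -⟩; exact lt_irrefl q h
    rw [g, g, if_pos h1, if_neg h2, if_pos h3, if_neg h4, if_pos rfl, hA, hB]
    ring
  · by_cases hlt : q < p
    · have h5 : ¬ p < q := asymm hlt
      have hqJ : q ∈ J := hp2 q hlt
      have h1 : ¬ CanTogOut (insert p J) q := fun h =>
        h.2 p hlt (Finset.mem_insert_self p J)
      have h3 : ¬ CanTogIn J q := fun h => h.1 hqJ
      have h4 : ¬ CanTogIn (insert p J) q := fun h => h.1 (Finset.mem_insert_of_mem hqJ)
      have h6 : (if q = p then wA p + wB p else 0) = 0 := if_neg hqp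
      have h7 : (if p < q ∧ CanTogIn (insert p J) q then wB q else 0) = 0 := by
        rw [if_neg]; rintro ⟨h, -⟩; exact h5 h
      have h8 : (if q < p ∧ CanTogOut J q then wA q else 0)
          = (if CanTogOut J q then wA q else 0) := by
        by_cases h : CanTogOut J q
        · rw [if_pos ⟨hlt, h⟩, if_pos h]
        · rw [if_neg (fun hh => h hh.2), if_neg h]
      rw [g, g, if_neg h1, if_neg h3, if_neg h4, h6, h7, h8]
      ring
    · by_cases hgt : p < q
      · have hqJ : q ∉ J := fun h => hp1 (hJ hgt.le h)
        have hqJ' : q ∉ insert p J := by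
          rw [Finset.mem_insert]; push_neg; exact ⟨hqp, hqJ⟩
        have h1 : ¬ CanTogOut (insert p J) q := fun h => hqJ' h.1
        have h2 : ¬ CanTogOut J q := fun h => hqJ h.1
        have h3 : ¬ CanTogIn J q := fun h => hp1 (h.2 p hgt)
        have h6 : (if q = p then wA p + wB p else 0) = 0 := if_neg hqp
        have h7 : (if q < p ∧ CanTogOut J q then wA q else 0) = 0 := by
          rw [if_neg]; rintro ⟨h, -⟩; exact hlt h
        have h8 : (if p < q ∧ CanTogIn (insert p J) q then wB q else 0)
            = (if CanTogIn (insert p J) q then wB q else 0) := by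
          by_cases h : CanTogIn (insert p J) q
          · rw [if_pos ⟨hgt, h⟩, if_pos h]
          · rw [if_neg (fun hh => h hh.2), if_neg h]
        rw [g, g, if_neg h1, if_neg h2, if_neg h3, h6, h7, h8]
        ring
      · -- incomparable
        have hout : CanTogOut (insert p J) q ↔ CanTogOut J q := by
          constructor
          · rintro ⟨hm, hmax⟩
            rcases Finset.mem_insert.mp hm with h | h
            · exact absurd h hqp
            · exact ⟨h, fun r hr hrJ => hmax r hr (Finset.mem_insert_of_mem hrJ)⟩
          · rintro ⟨hm, hmax⟩
            refine ⟨Finset.mem_insert_of_mem hm, ?_⟩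
            intro r hr hrmem
            rcases Finset.mem_insert.mp hrmem with h | h
            · subst h; exact hlt hr
            · exact hmax r hr h
        have hin : CanTogIn (insert p J) q ↔ CanTogIn J q := by
          constructor
          · rintro ⟨hm, hmin⟩
            refine ⟨fun h => hm (Finset.mem_insert_of_mem h), ?_⟩
            intro r hr
            rcases Finset.mem_insert.mp (hmin r hr) with h | h
            · subst h; exact absurd hr hgt
            · exact h
          · rintro ⟨hm, hmin⟩
            refine ⟨?_, fun r hr => Finset.mem_insert_of_mem (hmin r hr)⟩
            rw [Finset.mem_insert]; push_neg; exact ⟨hqp, hm⟩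
        have h6 : (if q = p then wA p + wB p else 0) = 0 := if_neg hqp
        have h7 : (if q < p ∧ CanTogOut J q then wA q else 0) = 0 := by
          rw [if_neg]; rintro ⟨h, -⟩; exact hlt h
        have h8 : (if p < q ∧ CanTogIn (insert p J) q then wB q else 0) = 0 := by
          rw [if_neg]; rintro ⟨h, -⟩; exact hgt h
        rw [g, g, if_congr hout rfl rfl, if_congr hin rfl rfl, h6, h7, h8]
        ring

end RootAAux
namespace RootAAux

variable {n : ℕ}

section Pairing

variable (J : Finset (RootA n)) (p : RootA n)

/-- First pairing, lower part: `x1 = (i-1, j)` is maximal in `J` iff `z1 = (i-1, j+1) ∉ J`. -/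
lemma pairA_out (hJ : IsIdeal J) (hp1 : p ∉ J) (hp2 : ∀ q, q < p → q ∈ J)
    (hs : n + 2 ≤ X p + Y p) (hb : Y p < n)
    (x1 z1 : RootA n) (hx1 : X x1 = X p - 1 ∧ Y x1 = Y p)
    (hz1 : X z1 = X p - 1 ∧ Y z1 = Y p + 1) :
    CanTogOut J x1 ↔ z1 ∉ J := by
  have hbp := bnd p
  have hx1p : x1 < p := by rw [lt_iff']; omega
  have hx1J : x1 ∈ J := hp2 _ hx1p
  constructor
  · intro h hzJ
    exact h.2 z1 (by rw [lt_iff']; omega) hzJ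
  · intro hz
    refine ⟨hx1J, ?_⟩
    intro r hr hrJ
    obtain ⟨l1, l2, l3⟩ := (lt_iff' x1 r).mp hr
    have hbr := bnd r
    rcases Nat.lt_or_ge (X r) (X p) with hxr | hxr
    · -- X r = X p - 1, so Y r ≥ Y p + 1 and z1 ≤ r
      have hyr : Y p + 1 ≤ Y r := by omega
      have : z1 ≤ r := by rw [le_iff']; omega
      exact hz (hJ this hrJ)
    · have : p ≤ r := by rw [le_iff']; omega
      exact hp1 (hJ this hrJ)

/-- First pairing, boundary case `j = n`: `x1` is always maximal in `J`. -/
lemma pairA_out_top (hJ : IsIdeal J) (hp1 : p ∉ J) (hp2 : ∀ q, q < p → q ∈ J)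
    (hs : n + 2 ≤ X p + Y p) (hb : Y p = n)
    (x1 : RootA n) (hx1 : X x1 = X p - 1 ∧ Y x1 = Y p) :
    CanTogOut J x1 := by
  have hbp := bnd p
  have hx1p : x1 < p := by rw [lt_iff']; omega
  refine ⟨hp2 _ hx1p, ?_⟩
  intro r hr hrJ
  obtain ⟨l1, l2, l3⟩ := (lt_iff' x1 r).mp hr
  have hbr := bnd r
  have : p ≤ r := by rw [le_iff']; omega
  exact hp1 (hJ this hrJ)

/-- First pairing, upper part: `y1 = (i, j+1)` is minimal in the complement of
`insert p J` iff `z1 = (i-1, j+1) ∈ J`. -/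
lemma pairA_in (hJ : IsIdeal J) (hp1 : p ∉ J) (hp2 : ∀ q, q < p → q ∈ J)
    (hs : n + 2 ≤ X p + Y p) (hb : Y p < n)
    (y1 z1 : RootA n) (hy1 : X y1 = X p ∧ Y y1 = Y p + 1)
    (hz1 : X z1 = X p - 1 ∧ Y z1 = Y p + 1) :
    CanTogIn (insert p J) y1 ↔ z1 ∈ J := by
  have hbp := bnd p
  have hpy1 : p < y1 := by rw [lt_iff']; omega
  have hy1n : y1 ∉ insert p J := by
    rw [Finset.mem_insert]
    rintro (h | h)
    · rw [eq_iff'] at h; omega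
    · exact hp1 (hJ hpy1.le h)
  constructor
  · intro h
    have hz1y1 : z1 < y1 := by rw [lt_iff']; omega
    rcases Finset.mem_insert.mp (h.2 z1 hz1y1) with h' | h'
    · rw [eq_iff'] at h'; omega
    · exact h'
  · intro hz
    refine ⟨hy1n, ?_⟩
    intro r hr
    obtain ⟨l1, l2, l3⟩ := (lt_iff' r y1).mp hr
    have hbr := bnd r
    rcases Nat.lt_or_ge (Y r) (Y p + 1) with hyr | hyr
    · -- Y r ≤ Y p so r ≤ p
      have hrp : r ≤ p := by rw [le_iff']; omega
      rcases eq_or_lt_of_le hrp with rfl | h'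
      · exact Finset.mem_insert_self r J
      · exact Finset.mem_insert_of_mem (hp2 r h')
    · -- Y r = Y p + 1, X r ≤ X p - 1, so r ≤ z1
      have : r ≤ z1 := by rw [le_iff']; omega
      exact Finset.mem_insert_of_mem (hJ this hz)

/-- Second pairing, lower part (coordinates swapped). -/
lemma pairB_out (hJ : IsIdeal J) (hp1 : p ∉ J) (hp2 : ∀ q, q < p → q ∈ J)
    (hs : n + 2 ≤ X p + Y p) (ha : X p < n)
    (x2 z2 : RootA n) (hx2 : X x2 = X p ∧ Y x2 = Y p - 1)
    (hz2 : X z2 = X p + 1 ∧ Y z2 = Y p - 1) :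
    CanTogOut J x2 ↔ z2 ∉ J := by
  have hbp := bnd p
  have hx2p : x2 < p := by rw [lt_iff']; omega
  have hx2J : x2 ∈ J := hp2 _ hx2p
  constructor
  · intro h hzJ
    exact h.2 z2 (by rw [lt_iff']; omega) hzJ
  · intro hz
    refine ⟨hx2J, ?_⟩
    intro r hr hrJ
    obtain ⟨l1, l2, l3⟩ := (lt_iff' x2 r).mp hr
    have hbr := bnd r
    rcases Nat.lt_or_ge (Y r) (Y p) with hyr | hyr
    · have hxr : X p + 1 ≤ X r := by omega
      have : z2 ≤ r := by rw [le_iff']; omega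
      exact hz (hJ this hrJ)
    · have : p ≤ r := by rw [le_iff']; omega
      exact hp1 (hJ this hrJ)

/-- Second pairing, boundary case `i = n`. -/
lemma pairB_out_top (hJ : IsIdeal J) (hp1 : p ∉ J) (hp2 : ∀ q, q < p → q ∈ J)
    (hs : n + 2 ≤ X p + Y p) (ha : X p = n)
    (x2 : RootA n) (hx2 : X x2 = X p ∧ Y x2 = Y p - 1) :
    CanTogOut J x2 := by
  have hbp := bnd p
  have hx2p : x2 < p := by rw [lt_iff']; omega
  refine ⟨hp2 _ hx2p, ?_⟩
  intro r hr hrJ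
  obtain ⟨l1, l2, l3⟩ := (lt_iff' x2 r).mp hr
  have hbr := bnd r
  have : p ≤ r := by rw [le_iff']; omega
  exact hp1 (hJ this hrJ)

/-- Second pairing, upper part. -/
lemma pairB_in (hJ : IsIdeal J) (hp1 : p ∉ J) (hp2 : ∀ q, q < p → q ∈ J)
    (hs : n + 2 ≤ X p + Y p) (ha : X p < n)
    (y2 z2 : RootA n) (hy2 : X y2 = X p + 1 ∧ Y y2 = Y p)
    (hz2 : X z2 = X p + 1 ∧ Y z2 = Y p - 1) :
    CanTogIn (insert p J) y2 ↔ z2 ∈ J := by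
  have hbp := bnd p
  have hpy2 : p < y2 := by rw [lt_iff']; omega
  have hy2n : y2 ∉ insert p J := by
    rw [Finset.mem_insert]
    rintro (h | h)
    · rw [eq_iff'] at h; omega
    · exact hp1 (hJ hpy2.le h)
  constructor
  · intro h
    have hz2y2 : z2 < y2 := by rw [lt_iff']; omega
    rcases Finset.mem_insert.mp (h.2 z2 hz2y2) with h' | h'
    · rw [eq_iff'] at h'; omega
    · exact h'
  · intro hz
    refine ⟨hy2n, ?_⟩
    intro r hr
    obtain ⟨l1, l2, l3⟩ := (lt_iff' r y2).mp hr
    have hbr := bnd r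
    rcases Nat.lt_or_ge (X r) (X p + 1) with hxr | hxr
    · have hrp : r ≤ p := by rw [le_iff']; omega
      rcases eq_or_lt_of_le hrp with rfl | h'
      · exact Finset.mem_insert_self r J
      · exact Finset.mem_insert_of_mem (hp2 r h')
    · have : r ≤ z2 := by rw [le_iff']; omega
      exact Finset.mem_insert_of_mem (hJ this hz)

end Pairing

end RootAAux
namespace RootAAux

variable {n : ℕ}

set_option maxHeartbeats 2000000 in
lemma f_insert (J : Finset (RootA n)) (p : RootA n) (hJ : IsIdeal J)
    (hp1 : p ∉ J) (hp2 : ∀ q, q < p → q ∈ J) :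
    f (insert p J) = f J := by
  have hbp := bnd p
  have hdiff : f (insert p J) - f J
      = (∑ q : RootA n, if q = p then wA p + wB p else 0)
        - (∑ q : RootA n, if q < p ∧ CanTogOut J q then wA q else 0)
        - (∑ q : RootA n, if p < q ∧ CanTogIn (insert p J) q then wB q else 0) := by
    rw [f, f, ← Finset.sum_sub_distrib, ← Finset.sum_sub_distrib, ← Finset.sum_sub_distrib]
    exact Finset.sum_congr rfl fun q _ => g_diff J p hJ hp1 hp2 q
  have hT1 : (∑ q : RootA n, if q = p then wA p + wB p else 0) = wA p + wB p := by
    rw [Finset.sum_ite_eq' univ p (fun _ => wA p + wB p), if_pos (mem_univ p)]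
  rcases Nat.lt_or_ge (X p + Y p) (n + 2) with hs | hs
  · -- rank 0 case
    have hsum : X p + Y p = n + 1 := by omega
    have h2 : (∑ q : RootA n, if q < p ∧ CanTogOut J q then wA q else 0) = 0 :=
      Finset.sum_eq_zero fun q _ => by
        rw [if_neg]; rintro ⟨h, -⟩; exact no_lt_of_rank0 p q hsum h
    have h3 : (∑ q : RootA n, if p < q ∧ CanTogIn (insert p J) q then wB q else 0) = 0 :=
      Finset.sum_eq_zero fun q _ => by
        split
        next h =>
          have hq : X q + Y q = n + 2 := by
            have := in_sum J p q hJ hp1 h.2 h.1; omega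
          have h' : ((X q : ℝ) + (Y q : ℝ)) = (n : ℝ) + 2 := by exact_mod_cast hq
          simp only [wB]; linarith
        next => rfl
    have hz : wA p + wB p = 0 := by
      have h' : ((X p : ℝ) + (Y p : ℝ)) = (n : ℝ) + 1 := by exact_mod_cast hsum
      simp only [wA, wB]; linarith
    rw [hT1, h2, h3, hz] at hdiff
    linarith
  · -- rank ≥ 1 case
    have hx2 : 2 ≤ X p := by omega
    have hy2 : 2 ≤ Y p := by omega
    set r : ℝ := (X p + Y p : ℝ) - (n + 1) with hrdef
    have hcast : ((X p - 1 : ℕ) : ℝ) = (X p : ℝ) - 1 := by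
      rw [Nat.cast_sub (by omega : 1 ≤ X p), Nat.cast_one]
    have hcast' : ((Y p - 1 : ℕ) : ℝ) = (Y p : ℝ) - 1 := by
      rw [Nat.cast_sub (by omega : 1 ≤ Y p), Nat.cast_one]
    set x1 : RootA n := mkE (X p - 1) (Y p) (by omega) with hx1def
    set x2 : RootA n := mkE (X p) (Y p - 1) (by omega) with hx2def
    have hx1c : X x1 = X p - 1 ∧ Y x1 = Y p := ⟨rfl, rfl⟩
    have hx2c : X x2 = X p ∧ Y x2 = Y p - 1 := ⟨rfl, rfl⟩
    have hx1ne : x1 ≠ x2 := by rw [Ne, eq_iff']; omega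
    have hx1lt : x1 < p := by rw [lt_iff']; omega
    have hx2lt : x2 < p := by rw [lt_iff']; omega
    have hwx1 : wA x1 = r := by
      simp only [wA, hx1c.1, hx1c.2, hcast, hrdef]; push_cast; ring
    have hwx2 : wA x2 = r := by
      simp only [wA, hx2c.1, hx2c.2, hcast', hrdef]; push_cast; ring
    -- T2 computation
    have hT2 : (∑ q : RootA n, if q < p ∧ CanTogOut J q then wA q else 0)
        = (if CanTogOut J x1 then r else 0) + (if CanTogOut J x2 then r else 0) := by
      rw [← Finset.sum_subset (Finset.subset_univ ({x1, x2} : Finset (RootA n)))]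
      · rw [Finset.sum_pair hx1ne]
        congr 1
        · rw [if_congr (and_iff_right hx1lt) rfl rfl, hwx1]
        · rw [if_congr (and_iff_right hx2lt) rfl rfl, hwx2]
      · intro q _ hq
        rw [if_neg]; rintro ⟨h1, h2⟩
        have hsq := out_sum J p q hp2 h2 h1
        obtain ⟨l1, l2, l3⟩ := (lt_iff' q p).mp h1
        have hbq := bnd q
        apply hq
        rw [Finset.mem_insert, Finset.mem_singleton, eq_iff', eq_iff']
        omega
    rw [hT1, hT2] at hdiff
    -- value of wA p + wB p
    have hwp : wA p + wB p = 2 * r := by simp only [wA, wB, hrdef]; ring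
    -- subcases on boundary
    rcases Nat.lt_or_ge (Y p) n with hbn | hbn'
    · -- j < n : y1, z1 exist
      set z1 : RootA n := mkE (X p - 1) (Y p + 1) (by omega) with hz1def
      set y1 : RootA n := mkE (X p) (Y p + 1) (by omega) with hy1def
      have hz1c : X z1 = X p - 1 ∧ Y z1 = Y p + 1 := ⟨rfl, rfl⟩
      have hy1c : X y1 = X p ∧ Y y1 = Y p + 1 := ⟨rfl, rfl⟩
      have hy1gt : p < y1 := by rw [lt_iff']; omega
      have hwy1 : wB y1 = r := by
        simp only [wB, hy1c.1, hy1c.2, hrdef]; push_cast; ring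
      have pair1 : (if CanTogOut J x1 then r else 0)
          + (if CanTogIn (insert p J) y1 then r else 0) = r := by
        rw [if_congr (pairA_out J p hJ hp1 hp2 hs hbn x1 z1 hx1c hz1c) rfl rfl,
          if_congr (pairA_in J p hJ hp1 hp2 hs hbn y1 z1 hy1c hz1c) rfl rfl]
        by_cases h : z1 ∈ J
        · rw [if_neg (fun h' => h' h), if_pos h]; ring
        · rw [if_pos h, if_neg h]; ring
      rcases Nat.lt_or_ge (X p) n with han | han'
      · -- i < n : y2, z2 exist
        set z2 : RootA n := mkE (X p + 1) (Y p - 1) (by omega) with hz2def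
        set y2 : RootA n := mkE (X p + 1) (Y p) (by omega) with hy2def
        have hz2c : X z2 = X p + 1 ∧ Y z2 = Y p - 1 := ⟨rfl, rfl⟩
        have hy2c : X y2 = X p + 1 ∧ Y y2 = Y p := ⟨rfl, rfl⟩
        have hy2gt : p < y2 := by rw [lt_iff']; omega
        have hy1ne : y1 ≠ y2 := by rw [Ne, eq_iff']; omega
        have hwy2 : wB y2 = r := by
          simp only [wB, hy2c.1, hy2c.2, hrdef]; push_cast; ring
        have hT3 : (∑ q : RootA n, if p < q ∧ CanTogIn (insert p J) q then wB q else 0)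
            = (if CanTogIn (insert p J) y1 then r else 0)
              + (if CanTogIn (insert p J) y2 then r else 0) := by
          rw [← Finset.sum_subset (Finset.subset_univ ({y1, y2} : Finset (RootA n)))]
          · rw [Finset.sum_pair hy1ne]
            congr 1
            · rw [if_congr (and_iff_right hy1gt) rfl rfl, hwy1]
            · rw [if_congr (and_iff_right hy2gt) rfl rfl, hwy2]
          · intro q _ hq
            rw [if_neg]; rintro ⟨h1, h2⟩
            have hsq := in_sum J p q hJ hp1 h2 h1
            obtain ⟨l1, l2, l3⟩ := (lt_iff' p q).mp h1
            have hbq := bnd q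
            apply hq
            rw [Finset.mem_insert, Finset.mem_singleton, eq_iff', eq_iff']
            omega
        have pair2 : (if CanTogOut J x2 then r else 0)
            + (if CanTogIn (insert p J) y2 then r else 0) = r := by
          rw [if_congr (pairB_out J p hJ hp1 hp2 hs han x2 z2 hx2c hz2c) rfl rfl,
            if_congr (pairB_in J p hJ hp1 hp2 hs han y2 z2 hy2c hz2c) rfl rfl]
          by_cases h : z2 ∈ J
          · rw [if_neg (fun h' => h' h), if_pos h]; ring
          · rw [if_pos h, if_neg h]; ring
        rw [hT3, hwp] at hdiff
        linarith
      · -- i = n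
        have han : X p = n := by omega
        have hT3 : (∑ q : RootA n, if p < q ∧ CanTogIn (insert p J) q then wB q else 0)
            = (if CanTogIn (insert p J) y1 then r else 0) := by
          rw [← Finset.sum_subset (Finset.subset_univ ({y1} : Finset (RootA n)))]
          · rw [Finset.sum_singleton]
            rw [if_congr (and_iff_right hy1gt) rfl rfl, hwy1]
          · intro q _ hq
            rw [if_neg]; rintro ⟨h1, h2⟩
            have hsq := in_sum J p q hJ hp1 h2 h1
            obtain ⟨l1, l2, l3⟩ := (lt_iff' p q).mp h1
            have hbq := bnd q
            apply hq
            rw [Finset.mem_singleton, eq_iff']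
            omega
        have pair2 : (if CanTogOut J x2 then r else 0) = r := by
          rw [if_pos (pairB_out_top J p hJ hp1 hp2 hs han x2 hx2c)]
        rw [hT3, hwp] at hdiff
        linarith
    · -- j = n
      have hbn : Y p = n := by omega
      have pair1 : (if CanTogOut J x1 then r else 0) = r := by
        rw [if_pos (pairA_out_top J p hJ hp1 hp2 hs hbn x1 hx1c)]
      rcases Nat.lt_or_ge (X p) n with han | han'
      · -- i < n : y2, z2 exist
        set z2 : RootA n := mkE (X p + 1) (Y p - 1) (by omega) with hz2def
        set y2 : RootA n := mkE (X p + 1) (Y p) (by omega) with hy2def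
        have hz2c : X z2 = X p + 1 ∧ Y z2 = Y p - 1 := ⟨rfl, rfl⟩
        have hy2c : X y2 = X p + 1 ∧ Y y2 = Y p := ⟨rfl, rfl⟩
        have hy2gt : p < y2 := by rw [lt_iff']; omega
        have hwy2 : wB y2 = r := by
          simp only [wB, hy2c.1, hy2c.2, hrdef]; push_cast; ring
        have hT3 : (∑ q : RootA n, if p < q ∧ CanTogIn (insert p J) q then wB q else 0)
            = (if CanTogIn (insert p J) y2 then r else 0) := by
          rw [← Finset.sum_subset (Finset.subset_univ ({y2} : Finset (RootA n)))]
          · rw [Finset.sum_singleton]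
            rw [if_congr (and_iff_right hy2gt) rfl rfl, hwy2]
          · intro q _ hq
            rw [if_neg]; rintro ⟨h1, h2⟩
            have hsq := in_sum J p q hJ hp1 h2 h1
            obtain ⟨l1, l2, l3⟩ := (lt_iff' p q).mp h1
            have hbq := bnd q
            apply hq
            rw [Finset.mem_singleton, eq_iff']
            omega
        have pair2 : (if CanTogOut J x2 then r else 0)
            + (if CanTogIn (insert p J) y2 then r else 0) = r := by
          rw [if_congr (pairB_out J p hJ hp1 hp2 hs han x2 z2 hx2c hz2c) rfl rfl,
            if_congr (pairB_in J p hJ hp1 hp2 hs han y2 z2 hy2c hz2c) rfl rfl]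
          by_cases h : z2 ∈ J
          · rw [if_neg (fun h' => h' h), if_pos h]; ring
          · rw [if_pos h, if_neg h]; ring
        rw [hT3, hwp] at hdiff
        linarith
      · -- i = n and j = n
        have han : X p = n := by omega
        have hT3 : (∑ q : RootA n, if p < q ∧ CanTogIn (insert p J) q then wB q else 0) = 0 :=
          Finset.sum_eq_zero fun q _ => by
            rw [if_neg]; rintro ⟨h1, h2⟩
            have hsq := in_sum J p q hJ hp1 h2 h1
            have hbq := bnd q
            omega
        have pair2 : (if CanTogOut J x2 then r else 0) = r := by
          rw [if_pos (pairB_out_top J p hJ hp1 hp2 hs han x2 hx2c)]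
        rw [hT3, hwp] at hdiff
        linarith

end RootAAux
namespace RootAAux

variable {n : ℕ}

lemma canTogIn_empty_iff (q : RootA n) :
    CanTogIn (∅ : Finset (RootA n)) q ↔ X q + Y q = n + 1 := by
  constructor
  · rintro ⟨-, hmin⟩
    by_contra h
    have hbq := bnd q
    have hx2 : 2 ≤ X q := by omega
    have hh : 1 ≤ X q - 1 ∧ X q - 1 ≤ n ∧ 1 ≤ Y q ∧ Y q ≤ n ∧ n + 1 ≤ (X q - 1) + Y q := by
      omega
    have hlt : mkE (X q - 1) (Y q) hh < q := by
      rw [lt_iff']; simp only [X_mkE, Y_mkE]; omega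
    exact absurd (hmin _ hlt) (Finset.notMem_empty _)
  · intro h
    exact ⟨Finset.notMem_empty q, fun r hr => absurd hr (no_lt_of_rank0 q r h)⟩

lemma card_rank0 : (univ.filter fun q : RootA n => X q + Y q = n + 1).card = n := by
  have key : (univ.filter fun q : RootA n => X q + Y q = n + 1).card
      = (Finset.range n).card := by
    apply Finset.card_bij (i := fun q _ => X q - 1)
    · intro q hq
      have hbq := bnd q
      have hq' := (Finset.mem_filter.mp hq).2
      rw [Finset.mem_range]
      omega
    · intro q1 h1 q2 h2 heq
      have hb1 := bnd q1
      have hb2 := bnd q2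
      have h1' := (Finset.mem_filter.mp h1).2
      have h2' := (Finset.mem_filter.mp h2).2
      rw [eq_iff']
      omega
    · intro m hm
      have hm' := Finset.mem_range.mp hm
      have hh : 1 ≤ m + 1 ∧ m + 1 ≤ n ∧ 1 ≤ n - m ∧ n - m ≤ n ∧ n + 1 ≤ (m + 1) + (n - m) := by
        omega
      refine ⟨mkE (m + 1) (n - m) hh, ?_, ?_⟩
      · rw [Finset.mem_filter]
        refine ⟨mem_univ _, ?_⟩
        simp only [X_mkE, Y_mkE]
        omega
      · simp only [X_mkE]
        omega
  rw [key, Finset.card_range]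

lemma f_empty : f (∅ : Finset (RootA n)) = n := by
  have h1 : ∀ q : RootA n, g ∅ q = if X q + Y q = n + 1 then (1 : ℝ) else 0 := by
    intro q
    have hout : ¬ CanTogOut (∅ : Finset (RootA n)) q := fun h =>
      absurd h.1 (Finset.notMem_empty q)
    rw [g, if_neg hout, if_congr (canTogIn_empty_iff q) rfl rfl]
    by_cases h : X q + Y q = n + 1
    · rw [if_pos h, if_pos h]
      have h' : ((X q : ℝ) + (Y q : ℝ)) = (n : ℝ) + 1 := by exact_mod_cast h
      simp only [wB]; linarith
    · rw [if_neg h, if_neg h]; ring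
  calc f (∅ : Finset (RootA n))
      = ∑ q : RootA n, if X q + Y q = n + 1 then (1 : ℝ) else 0 :=
        Finset.sum_congr rfl fun q _ => h1 q
    _ = ((univ.filter fun q : RootA n => X q + Y q = n + 1).card : ℝ) := by
        rw [Finset.sum_boole]
    _ = n := by rw [card_rank0]

lemma f_ideal : ∀ I : Finset (RootA n), IsIdeal I → f I = n := by
  intro I
  induction I using Finset.strongInduction with
  | _ I ih =>
    intro hI
    rcases I.eq_empty_or_nonempty with rfl | hne
    · exact f_empty
    · obtain ⟨p, hpI, hpmax⟩ := I.exists_maximal hne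
      have hsub : I.erase p ⊂ I := Finset.erase_ssubset hpI
      have hJ : IsIdeal (I.erase p) := by
        intro x y hxy hy
        have hyI : y ∈ I := Finset.mem_of_mem_erase hy
        refine Finset.mem_erase.mpr ⟨?_, hI hxy hyI⟩
        rintro rfl
        exact (Finset.ne_of_mem_erase hy) (le_antisymm (hpmax hyI hxy) hxy)
      have hp1 : p ∉ I.erase p := Finset.notMem_erase p I
      have hp2 : ∀ q, q < p → q ∈ I.erase p := fun q hq =>
        Finset.mem_erase.mpr ⟨ne_of_lt hq, hI hq.le hpI⟩
      have hstep := f_insert (I.erase p) p hJ hp1 hp2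
      rw [Finset.insert_erase hpI] at hstep
      rw [hstep]
      exact ih _ hsub hJ

lemma point (I : Finset (RootA n)) (p : RootA n) :
    (if CanTogOut I p then (1 : ℝ) else 0) - (wB p / 2) * Tsgn p I = g I p / 2 := by
  by_cases h1 : CanTogOut I p <;> by_cases h2 : CanTogIn I p <;>
    simp only [g, Tsgn, Tin, Tout, h1, h2, if_true, if_false, wA, wB] <;> ring

end RootAAux

open RootAAux

theorem rootA_antichain_card_homomesy (n : ℕ) (hn : 1 ≤ n) :
    ∃ c : RootA n → ℝ,
      (∀ I : Finset (RootA n), IsIdeal I →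
        ((univ.filter fun p : RootA n => CanTogOut I p).card : ℝ)
          = (n : ℝ) / 2 + ∑ p : RootA n, c p * Tsgn p I) ∧
      (∀ I : Finset (RootA n), IsIdeal I → ∀ N : ℕ, 0 < N → rowmotion^[N] I = I →
        ∑ k ∈ Finset.range N,
            ((univ.filter fun p : RootA n => CanTogOut (rowmotion^[k] I) p).card : ℝ)
          = N * ((n : ℝ) / 2)) := by
  have hpart1 : ∀ I : Finset (RootA n), IsIdeal I →
      ((univ.filter fun p : RootA n => CanTogOut I p).card : ℝ)
        = (n : ℝ) / 2 + ∑ p : RootA n, (wB p / 2) * Tsgn p I := by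
    intro I hI
    have hf : ∑ p : RootA n, g I p = (n : ℝ) := f_ideal I hI
    have hcard : ((univ.filter fun p : RootA n => CanTogOut I p).card : ℝ)
        = ∑ p : RootA n, if CanTogOut I p then (1 : ℝ) else 0 := by
      rw [Finset.sum_boole]
    have hsum : (∑ p : RootA n, if CanTogOut I p then (1 : ℝ) else 0)
        - ∑ p : RootA n, (wB p / 2) * Tsgn p I = ∑ p : RootA n, g I p / 2 := by
      rw [← Finset.sum_sub_distrib]
      exact Finset.sum_congr rfl fun p _ => point I p
    rw [← Finset.sum_div, hf] at hsum
    rw [hcard]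
    linarith
  refine ⟨fun p => wB p / 2, hpart1, ?_⟩
  intro I hI N hN hcyc
  have hIter : ∀ k, IsIdeal (rowmotion^[k] I) := by
    intro k
    induction k with
    | zero => simpa using hI
    | succ k ih => rw [Function.iterate_succ_apply']; exact rowmotion_isIdeal _
  have hzero : ∑ k ∈ Finset.range N, ∑ p : RootA n, (wB p / 2) * Tsgn p (rowmotion^[k] I)
      = 0 := by
    rw [Finset.sum_comm]
    apply Finset.sum_eq_zero
    intro p _
    have hts : ∀ k, Tsgn p (rowmotion^[k] I)
        = Tout p (rowmotion^[k + 1] I) - Tout p (rowmotion^[k] I) := by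
      intro k
      rw [Tsgn]
      congr 1
      rw [Tin, Tout, Function.iterate_succ_apply']
      exact (if_congr (canTogOut_rowmotion _ p) rfl rfl).symm
    rw [← Finset.mul_sum]
    have htel : ∑ k ∈ Finset.range N, Tsgn p (rowmotion^[k] I)
        = Tout p (rowmotion^[N] I) - Tout p (rowmotion^[0] I) := by
      rw [Finset.sum_congr rfl fun k _ => hts k]
      exact Finset.sum_range_sub (fun k => Tout p (rowmotion^[k] I)) N
    rw [htel, hcyc, Function.iterate_zero_apply, sub_self, mul_zero]
  calc ∑ k ∈ Finset.range N,
        ((univ.filter fun p : RootA n => CanTogOut (rowmotion^[k] I) p).card : ℝ)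
      = ∑ k ∈ Finset.range N,
          ((n : ℝ) / 2 + ∑ p : RootA n, (wB p / 2) * Tsgn p (rowmotion^[k] I)) :=
        Finset.sum_congr rfl fun k _ => hpart1 _ (hIter k)
    _ = N * ((n : ℝ) / 2) := by
        rw [Finset.sum_add_distrib, hzero, add_zero, Finset.sum_const, Finset.card_range,
          nsmul_eq_mul]
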